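/- arXiv:0802.3437 — 2 statements merged into one kernel-verified Lean document; each statement's English description precedes it below -/
import Mathlib

section
/- For m ≥ 3 and n = 2^m, let a₁ ∈ F₂ⁿ be the weight-2 vector corresponding to the Boolean function Y₁Y₂⋯Y_{m-1} (i.e., with ones exactly in the last two coordinates under the standard ordering). Then the coset RM(m-2,m) + a₁ contains exactly (1/n)·[C(n, n/2) − C(n/2, n/4)] balanced words. -/
/-- Weight of a Boolean function: number of inputs mapped to 1. -/
def wtF {m : ℕ} (f : (Fin m → ZMod 2) → ZMod 2) : ℕ :=
  (Finset.univ.filter fun x => f x = 1).card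

/-- The Reed–Muller code RM(r,m): the span of the monomial functions of degree ≤ r,
i.e. truth tables of Boolean functions in m variables of degree at most r. -/
def RM (r m : ℕ) : Submodule (ZMod 2) ((Fin m → ZMod 2) → ZMod 2) :=
  Submodule.span (ZMod 2)
    {f | ∃ S : Finset (Fin m), S.card ≤ r ∧ f = fun x => ∏ i ∈ S, x i}

namespace EHCaux

open Finset Polynomial

variable {m : ℕ}

lemma zmod2_cases (u : ZMod 2) : u = 0 ∨ u = 1 := by revert u; decide

/-! ### Supports of `ZMod 2`-valued functions -/

def suppG {ι : Type*} [Fintype ι] [DecidableEq ι] (x : ι → ZMod 2) : Finset ι :=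
  univ.filter (fun i => x i = 1)

def indG {ι : Type*} [Fintype ι] [DecidableEq ι] (S : Finset ι) : ι → ZMod 2 :=
  fun i => if i ∈ S then 1 else 0

lemma suppG_inj {ι : Type*} [Fintype ι] [DecidableEq ι] :
    Function.Injective (suppG (ι := ι)) := by
  intro x y h
  funext i
  have hx := zmod2_cases (x i); have hy := zmod2_cases (y i)
  have : (i ∈ suppG x) ↔ i ∈ suppG y := by rw [h]
  simp [suppG] at this
  rcases hx with hx | hx <;> rcases hy with hy | hy <;> simp_all

lemma indG_suppG {ι : Type*} [Fintype ι] [DecidableEq ι] (x : ι → ZMod 2) :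
    indG (suppG x) = x := by
  funext i
  rcases zmod2_cases (x i) with h | h <;> simp [indG, suppG, h]

lemma suppG_indG {ι : Type*} [Fintype ι] [DecidableEq ι] (S : Finset ι) :
    suppG (indG S) = S := by
  ext i; simp [suppG, indG]

lemma suppG_bij {ι : Type*} [Fintype ι] [DecidableEq ι] :
    Function.Bijective (suppG (ι := ι)) := by
  rw [Fintype.bijective_iff_injective_and_card]
  refine ⟨suppG_inj, ?_⟩
  simp [Fintype.card_finset]

/-! ### ANF (Möbius) theory -/

def monoF (T : Finset (Fin m)) : (Fin m → ZMod 2) → ZMod 2 := fun x => ∏ i ∈ T, x i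

lemma monoF_eq (T : Finset (Fin m)) (x : Fin m → ZMod 2) :
    monoF T x = if T ⊆ suppG x then 1 else 0 := by
  unfold monoF
  split
  · rename_i h
    exact Finset.prod_eq_one (fun i hi => by have := h hi; simpa [suppG] using this)
  · rename_i h
    rw [Finset.subset_iff] at h
    push_neg at h
    obtain ⟨i, hi, hix⟩ := h
    refine Finset.prod_eq_zero hi ?_
    rcases zmod2_cases (x i) with h0 | h1
    · exact h0
    · exact absurd (by simp [suppG, h1]) hix

def anfF (T : Finset (Fin m)) (v : (Fin m → ZMod 2) → ZMod 2) : ZMod 2 :=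
  ∑ y ∈ univ.filter (fun y => suppG y ⊆ T), v y

lemma card_Icc_zmod (S T : Finset (Fin m)) :
    (((Finset.Icc S T).card : ℕ) : ZMod 2) = if S = T then 1 else 0 := by
  by_cases h : S ⊆ T
  · rw [Finset.card_Icc_finset h]
    by_cases he : S = T
    · simp [he]
    · have hlt : S.card < T.card := Finset.card_lt_card (lt_of_le_of_ne h he)
      rw [if_neg he]
      push_cast
      rw [show ((2:ZMod 2)) = 0 by decide, zero_pow (by omega)]
  · rw [Finset.Icc_eq_empty (by simpa using h)]
    have : S ≠ T := fun he => h (he ▸ le_refl _)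
    simp [this]

lemma anfF_monoF (S T : Finset (Fin m)) :
    anfF T (monoF S) = (((Finset.Icc S T).card : ℕ) : ZMod 2) := by
  unfold anfF
  rw [Finset.sum_filter]
  have step1 : ∀ y : Fin m → ZMod 2,
      (if suppG y ⊆ T then monoF S y else 0) = (if suppG y ∈ Finset.Icc S T then 1 else 0) := by
    intro y
    rw [monoF_eq]
    by_cases h1 : suppG y ⊆ T <;> by_cases h2 : S ⊆ suppG y <;>
      simp [Finset.mem_Icc, Finset.le_iff_subset, h1, h2]
  simp_rw [step1]
  rw [Fintype.sum_bijective suppG suppG_bij _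
    (fun U => if U ∈ Finset.Icc S T then (1:ZMod 2) else 0) (fun y => rfl)]
  rw [← Finset.sum_filter, Finset.filter_univ_mem, Finset.sum_const, nsmul_eq_mul, mul_one]

lemma mobius (v : (Fin m → ZMod 2) → ZMod 2) (x : Fin m → ZMod 2) :
    ∑ T : Finset (Fin m), anfF T v * monoF T x = v x := by
  classical
  calc ∑ T : Finset (Fin m), anfF T v * monoF T x
      = ∑ T : Finset (Fin m), ∑ y : (Fin m → ZMod 2),
          (if suppG y ⊆ T ∧ T ⊆ suppG x then v y else 0) := by
        refine Finset.sum_congr rfl fun T _ => ?_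
        rw [anfF, monoF_eq, Finset.sum_filter]
        split
        · rename_i h
          rw [mul_one]
          exact Finset.sum_congr rfl fun y _ => by simp [h]
        · rename_i h
          rw [mul_zero]
          exact (Finset.sum_eq_zero fun y _ => by simp [h]).symm
    _ = ∑ y, ∑ T, (if suppG y ⊆ T ∧ T ⊆ suppG x then v y else 0) := Finset.sum_comm
    _ = ∑ y : Fin m → ZMod 2, (if suppG y = suppG x then v y else 0) := by
        refine Finset.sum_congr rfl fun y _ => ?_
        rw [← Finset.sum_filter]
        have hIcc : univ.filter (fun T => suppG y ⊆ T ∧ T ⊆ suppG x)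
            = Finset.Icc (suppG y) (suppG x) := by
          ext T; simp [Finset.mem_Icc, Finset.le_iff_subset]
        rw [hIcc, Finset.sum_const, nsmul_eq_mul, card_Icc_zmod]
        split <;> simp
    _ = v x := by
        rw [Finset.sum_eq_single x (fun y _ hy => if_neg (fun h => hy (suppG_inj h)))
          (fun h => absurd (Finset.mem_univ x) h)]
        simp

/-! ### Membership in RM(m-2, m) -/

lemma anfF_add (T : Finset (Fin m)) (v w : (Fin m → ZMod 2) → ZMod 2) :
    anfF T (v + w) = anfF T v + anfF T w := by
  simp [anfF, Finset.sum_add_distrib]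

lemma anfF_smul (T : Finset (Fin m)) (c : ZMod 2) (v : (Fin m → ZMod 2) → ZMod 2) :
    anfF T (c • v) = c * anfF T v := by
  simp [anfF, Finset.mul_sum]

lemma mem_RM_iff (hm : 3 ≤ m) (v : (Fin m → ZMod 2) → ZMod 2) :
    v ∈ RM (m - 2) m ↔ ∀ T : Finset (Fin m), m - 1 ≤ T.card → anfF T v = 0 := by
  constructor
  · intro hv
    refine Submodule.span_induction ?_ ?_ ?_ ?_ hv
    · rintro f ⟨S, hS, rfl⟩ T hT
      have : anfF T (monoF S) = 0 := by
        rw [anfF_monoF, card_Icc_zmod, if_neg]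
        intro h
        subst h
        omega
      exact this
    · intro T hT; simp [anfF]
    · intro f g _ _ hf hg T hT
      rw [anfF_add, hf T hT, hg T hT, add_zero]
    · intro c f _ hf T hT
      rw [anfF_smul, hf T hT, mul_zero]
  · intro h
    have hv : v = ∑ T : Finset (Fin m), anfF T v • monoF T := by
      funext x
      rw [Finset.sum_apply]
      simp only [Pi.smul_apply, smul_eq_mul]
      exact (mobius v x).symm
    rw [hv]
    refine Submodule.sum_mem _ fun T _ => ?_
    by_cases hc : T.card ≤ m - 2
    · exact Submodule.smul_mem _ _ (Submodule.subset_span ⟨T, hc, rfl⟩)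
    · rw [h T (by omega), zero_smul]
      exact Submodule.zero_mem _

/-! ### The coset characterization -/

def lastI (m : ℕ) (hm : 3 ≤ m) : Fin m := ⟨m - 1, by omega⟩

def S₀ (m : ℕ) (hm : 3 ≤ m) : Finset (Fin m) :=
  Finset.univ.filter (fun i : Fin m => (i : ℕ) < m - 1)

lemma S₀_eq (hm : 3 ≤ m) : S₀ m hm = Finset.univ.erase (lastI m hm) := by
  ext i
  simp [S₀, lastI, Finset.mem_erase, Fin.ext_iff]
  omega

lemma S₀_card (hm : 3 ≤ m) : (S₀ m hm).card = m - 1 := by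
  rw [S₀_eq hm, Finset.card_erase_of_mem (Finset.mem_univ _), Finset.card_univ, Fintype.card_fin]

lemma sum_eq_wt (v : (Fin m → ZMod 2) → ZMod 2) :
    ∑ y : Fin m → ZMod 2, v y = ((wtF v : ℕ) : ZMod 2) := by
  rw [← Finset.sum_filter_add_sum_filter_not univ (fun y => v y = 1)]
  rw [Finset.sum_eq_zero (s := univ.filter (fun y => ¬ v y = 1))
    (fun y hy => by rcases zmod2_cases (v y) with h | h; exact h;
                    exact absurd h (Finset.mem_filter.mp hy).2)]
  rw [add_zero, Finset.sum_congr rfl (fun y hy => (Finset.mem_filter.mp hy).2), wtF]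
  simp

lemma anfF_univ (v : (Fin m → ZMod 2) → ZMod 2) :
    anfF Finset.univ v = ∑ y : Fin m → ZMod 2, v y := by
  unfold anfF
  congr 1
  simp [Finset.filter_true_of_mem]

def LF (j : Fin m) (v : (Fin m → ZMod 2) → ZMod 2) : ZMod 2 := ∑ y, v y * y j

lemma anfF_erase (j : Fin m) (v : (Fin m → ZMod 2) → ZMod 2) :
    anfF (Finset.univ.erase j) v + LF j v = ∑ y : Fin m → ZMod 2, v y := by
  have h1 : anfF (Finset.univ.erase j) v = ∑ y ∈ univ.filter (fun y => y j = 0), v y := by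
    unfold anfF
    congr 1
    ext y
    simp only [Finset.mem_filter, Finset.mem_univ, true_and]
    constructor
    · intro h
      rcases zmod2_cases (y j) with h0 | h1
      · exact h0
      · exact absurd ((Finset.mem_erase.mp (h (by simp [suppG, h1]))).1 rfl) (by simp)
    · intro h i hi
      simp only [suppG, Finset.mem_filter] at hi
      refine Finset.mem_erase.mpr ⟨?_, Finset.mem_univ _⟩
      rintro rfl
      rw [h] at hi
      exact one_ne_zero hi.2.symm
  have h2 : LF j v = ∑ y ∈ univ.filter (fun y => ¬ y j = 0), v y := by
    unfold LF
    rw [Finset.sum_filter]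
    refine Finset.sum_congr rfl fun y _ => ?_
    rcases zmod2_cases (y j) with h0 | h0 <;> simp [h0]
  rw [h1, h2, Finset.sum_filter_add_sum_filter_not]

lemma bigT (hm : 3 ≤ m) (T : Finset (Fin m)) (hT : m - 1 ≤ T.card) :
    T = Finset.univ ∨ ∃ j : Fin m, T = Finset.univ.erase j := by
  by_cases h : T = Finset.univ
  · exact Or.inl h
  · right
    have : ∃ j, j ∉ T := by
      by_contra hc
      push_neg at hc
      exact h (Finset.eq_univ_of_forall hc)
    obtain ⟨j, hj⟩ := this
    refine ⟨j, ?_⟩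
    have hsub : T ⊆ Finset.univ.erase j := fun i hi =>
      Finset.mem_erase.mpr ⟨fun he => hj (he ▸ hi), Finset.mem_univ _⟩
    refine Finset.eq_of_subset_of_card_le hsub ?_
    rw [Finset.card_erase_of_mem (Finset.mem_univ _), Finset.card_univ, Fintype.card_fin]
    omega

lemma coset_iff (hm : 3 ≤ m) (a₁ v : (Fin m → ZMod 2) → ZMod 2)
    (ha : a₁ = monoF (S₀ m hm)) (hw : wtF v = 2 ^ (m - 1)) :
    (∃ c ∈ RM (m - 2) m, v = c + a₁) ↔ ∀ j : Fin m, LF j v = if j = lastI m hm then 1 else 0 := by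
  have hsum : ∑ y : Fin m → ZMod 2, v y = 0 := by
    rw [sum_eq_wt, hw]
    push_cast
    rw [show ((2:ZMod 2)) = 0 by decide, zero_pow (by omega)]
  have key : (∃ c ∈ RM (m - 2) m, v = c + a₁) ↔ v + a₁ ∈ RM (m - 2) m := by
    constructor
    · rintro ⟨c, hc, rfl⟩
      have : c + a₁ + a₁ = c := by
        funext x
        show c x + a₁ x + a₁ x = c x
        rw [add_assoc, CharTwo.add_self_eq_zero, add_zero]
      rw [this]; exact hc
    · intro h
      refine ⟨v + a₁, h, ?_⟩
      funext x
      show v x = (v x + a₁ x) + a₁ x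
      rw [add_assoc, CharTwo.add_self_eq_zero, add_zero]
  rw [key, mem_RM_iff hm]
  have hanf : ∀ T : Finset (Fin m), anfF T (v + a₁) = anfF T v + (if S₀ m hm = T then 1 else 0) := by
    intro T
    rw [anfF_add, ha, anfF_monoF, card_Icc_zmod]
  constructor
  · intro h j
    have hcard : m - 1 ≤ (Finset.univ.erase j : Finset (Fin m)).card := by
      rw [Finset.card_erase_of_mem (Finset.mem_univ _), Finset.card_univ, Fintype.card_fin]
    have := h _ hcard
    rw [hanf] at this
    have hL := anfF_erase j v
    rw [hsum] at hL
    have hLj : LF j v = anfF (Finset.univ.erase j) v := by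
      rcases zmod2_cases (LF j v) with h0 | h1 <;>
        rcases zmod2_cases (anfF (Finset.univ.erase j) v) with g0 | g1 <;>
          simp_all
    rw [hLj]
    by_cases hj : j = lastI m hm
    · subst hj
      rw [if_pos rfl]
      rw [if_pos (S₀_eq hm)] at this
      rcases zmod2_cases (anfF (Finset.univ.erase (lastI m hm)) v) with h0 | h1
      · rw [h0] at this; simp at this
      · exact h1
    · rw [if_neg hj]
      rw [if_neg (fun hS => hj ?_)] at this
      · rcases zmod2_cases (anfF (Finset.univ.erase j) v) with h0 | h1
        · exact h0
        · rw [h1] at this; simp at this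
      · have : lastI m hm ∉ S₀ m hm := by rw [S₀_eq hm]; simp
        rw [hS] at this
        simp only [Finset.mem_erase, Finset.mem_univ, and_true, not_not] at this
        · exact this.symm
  · intro h T hT
    rw [hanf]
    rcases bigT hm T hT with rfl | ⟨j, rfl⟩
    · rw [anfF_univ, hsum, if_neg, add_zero]
      intro hS
      have : (S₀ m hm).card = m := by rw [hS, Finset.card_univ, Fintype.card_fin]
      rw [S₀_card hm] at this
      omega
    · have hL := anfF_erase j v
      rw [hsum] at hL
      have hLj : anfF (Finset.univ.erase j) v = LF j v := by
        rcases zmod2_cases (LF j v) with h0 | h1 <;>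
          rcases zmod2_cases (anfF (Finset.univ.erase j) v) with g0 | g1 <;>
            simp_all
      rw [hLj, h j]
      by_cases hj : j = lastI m hm
      · subst hj
        rw [if_pos rfl, if_pos (S₀_eq hm)]
        decide
      · rw [if_neg hj, if_neg, add_zero]
        intro hS
        have : lastI m hm ∉ S₀ m hm := by rw [S₀_eq hm]; simp
        rw [hS] at this
        simp only [Finset.mem_erase, Finset.mem_univ, and_true, not_not] at this
        exact hj this.symm

/-! ### Character sums over `ZMod 2` vectors -/

def epsZ (u : ZMod 2) : ℤ := if u = 0 then 1 else -1

lemma epsZ_add (u v : ZMod 2) : epsZ (u + v) = epsZ u * epsZ v := by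
  fin_cases u <;> fin_cases v <;> decide

lemma epsZ_sum {ι : Type*} (s : Finset ι) (f : ι → ZMod 2) :
    epsZ (∑ i ∈ s, f i) = ∏ i ∈ s, epsZ (f i) := by
  classical
  induction s using Finset.induction_on with
  | empty => simp [epsZ]
  | insert a s hx ih => rw [Finset.sum_insert hx, Finset.prod_insert hx, epsZ_add, ih]

def dotP (a u : Fin m → ZMod 2) : ZMod 2 := ∑ j, a j * u j

lemma sum_zmod2 (f : ZMod 2 → ℤ) : ∑ b : ZMod 2, f b = f 0 + f 1 := by
  have : (univ : Finset (ZMod 2)) = {0, 1} := by decide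
  rw [this, Finset.sum_insert (by decide), Finset.sum_singleton]

lemma orth (u : Fin m → ZMod 2) :
    ∑ a : Fin m → ZMod 2, epsZ (dotP a u) = if u = 0 then 2 ^ m else 0 := by
  have h1 : ∀ a : Fin m → ZMod 2, epsZ (dotP a u) = ∏ j, epsZ (a j * u j) := fun a =>
    epsZ_sum univ (fun j => a j * u j)
  simp_rw [h1]
  rw [show (∑ a : Fin m → ZMod 2, ∏ j, epsZ (a j * u j))
      = ∏ j, ∑ b : ZMod 2, epsZ (b * u j) from
    (Fintype.prod_sum (fun (j : Fin m) (b : ZMod 2) => epsZ (b * u j))).symm]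
  have h2 : ∀ j : Fin m, (∑ b : ZMod 2, epsZ (b * u j)) = if u j = 0 then 2 else 0 := by
    intro j
    have hcase : u j = 0 ∨ u j = 1 := zmod2_cases (u j)
    rcases hcase with h | h <;> rw [sum_zmod2] <;> simp [h, epsZ]
  simp_rw [h2]
  by_cases hu : u = 0
  · subst hu; simp
  · rw [if_neg hu]
    have : ∃ j, u j ≠ 0 := by
      by_contra hc; push_neg at hc; exact hu (funext hc)
    obtain ⟨j, hj⟩ := this
    exact Finset.prod_eq_zero (Finset.mem_univ j) (if_neg hj)

lemma dot_balanced (hm : 3 ≤ m) (a : Fin m → ZMod 2) (ha : a ≠ 0) :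
    (univ.filter (fun y : Fin m → ZMod 2 => dotP a y = 0)).card = 2 ^ (m - 1) := by
  obtain ⟨j, hj⟩ : ∃ j, a j ≠ 0 := by
    by_contra hc; push_neg at hc; exact ha (funext hc)
  have haj : a j = 1 := (zmod2_cases (a j)).resolve_left hj
  set y₀ : Fin m → ZMod 2 := fun i => if i = j then 1 else 0 with hy₀
  have hdot0 : dotP a y₀ = 1 := by
    unfold dotP
    rw [Finset.sum_eq_single j]
    · simp [hy₀, haj]
    · intro b _ hb; simp [hy₀, hb]
    · intro h; exact absurd (Finset.mem_univ j) h
  have hlin : ∀ y, dotP a (y + y₀) = dotP a y + 1 := by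
    intro y
    unfold dotP
    rw [← hdot0]
    unfold dotP
    rw [← Finset.sum_add_distrib]
    exact Finset.sum_congr rfl fun i _ => by simp [Pi.add_apply, mul_add]
  have hcard : (univ.filter (fun y : Fin m → ZMod 2 => dotP a y = 0)).card
      = (univ.filter (fun y : Fin m → ZMod 2 => ¬ dotP a y = 0)).card := by
    refine Finset.card_nbij (fun y => y + y₀) ?_ ?_ ?_
    · intro y hy
      simp only [Finset.mem_coe, Finset.mem_filter, Finset.mem_univ, true_and] at *
      rw [hlin y, hy]
      decide
    · intro y hy z hz hyz
      have := congrArg (· + y₀) hyz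
      simpa [add_assoc, CharTwo.add_self_eq_zero] using this
    · intro y hy
      simp only [Set.mem_image, Finset.mem_coe, Finset.mem_filter, Finset.mem_univ, true_and] at *
      refine ⟨y + y₀, ?_, by funext i; simp [add_assoc, CharTwo.add_self_eq_zero]⟩
      rw [hlin y]
      rcases zmod2_cases (dotP a y) with h | h
      · exact absurd h hy
      · rw [h]; decide
  have htot := Finset.card_filter_add_card_filter_not
    (s := (univ : Finset (Fin m → ZMod 2))) (p := fun y => dotP a y = 0)
  rw [Finset.card_univ] at htot
  have hcard2 : Fintype.card (Fin m → ZMod 2) = 2 ^ m := by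
    simp
  rw [hcard2] at htot
  have h2 : 2 ^ m = 2 ^ (m - 1) * 2 := by
    rw [← pow_succ]; congr 1; omega
  omega

lemma Ea_ne (hm : 3 ≤ m) (a : Fin m → ZMod 2) (ha : a ≠ 0) :
    ∑ S ∈ Finset.powersetCard (2 ^ (m - 1)) (univ : Finset (Fin m → ZMod 2)),
      ∏ y ∈ S, epsZ (dotP a y)
    = ((2 ^ (m - 1)).choose (2 ^ (m - 2)) : ℤ) := by
  set h : ℕ := 2 ^ (m - 1) with hh
  set P : ℤ[X] := ∏ y : Fin m → ZMod 2, (Polynomial.C (epsZ (dotP a y)) * X + 1) with hP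
  have coeffP : P.coeff h = ∑ S ∈ Finset.powersetCard h (univ : Finset (Fin m → ZMod 2)),
      ∏ y ∈ S, epsZ (dotP a y) := by
    rw [hP, Finset.prod_add]
    have : ∀ t ∈ (univ : Finset (Fin m → ZMod 2)).powerset,
        ((∏ y ∈ t, (Polynomial.C (epsZ (dotP a y)) * X)) * ∏ y ∈ univ \ t, (1:ℤ[X]))
        = Polynomial.C (∏ y ∈ t, epsZ (dotP a y)) * X ^ t.card := by
      intro t _
      rw [Finset.prod_const_one, mul_one, Finset.prod_mul_distrib, Finset.prod_const,
        ← map_prod]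
    rw [Finset.sum_congr rfl this, Polynomial.finset_sum_coeff]
    have : ∀ t ∈ (univ : Finset (Fin m → ZMod 2)).powerset,
        (Polynomial.C (∏ y ∈ t, epsZ (dotP a y)) * X ^ t.card).coeff h
        = if t.card = h then ∏ y ∈ t, epsZ (dotP a y) else 0 := by
      intro t _
      rw [Polynomial.coeff_C_mul, Polynomial.coeff_X_pow]
      by_cases hc : t.card = h
      · simp [hc]
      · rw [if_neg (fun hh' => hc hh'.symm), if_neg hc, mul_zero]
    rw [Finset.sum_congr rfl this, ← Finset.sum_filter, Finset.powersetCard_eq_filter]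
  have hprod : P = (1 - X ^ 2) ^ h := by
    rw [hP, ← Finset.prod_filter_mul_prod_filter_not univ (fun y => dotP a y = 0)]
    have e1 : ∀ y ∈ univ.filter (fun y : Fin m → ZMod 2 => dotP a y = 0),
        Polynomial.C (epsZ (dotP a y)) * X + 1 = X + 1 := by
      intro y hy
      rw [(Finset.mem_filter.mp hy).2]
      simp [epsZ]
    have e2 : ∀ y ∈ univ.filter (fun y : Fin m → ZMod 2 => ¬ dotP a y = 0),
        Polynomial.C (epsZ (dotP a y)) * X + 1 = 1 - X := by
      intro y hy
      have := (Finset.mem_filter.mp hy).2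
      rw [(zmod2_cases (dotP a y)).resolve_left this]
      simp [epsZ]
      ring
    rw [Finset.prod_congr rfl e1, Finset.prod_congr rfl e2, Finset.prod_const, Finset.prod_const]
    rw [dot_balanced hm a ha]
    have hcompl : (univ.filter (fun y : Fin m → ZMod 2 => ¬ dotP a y = 0)).card = 2 ^ (m - 1) := by
      have htot := Finset.card_filter_add_card_filter_not
        (s := (univ : Finset (Fin m → ZMod 2))) (p := fun y => dotP a y = 0)
      rw [Finset.card_univ, dot_balanced hm a ha] at htot
      have hcard2 : Fintype.card (Fin m → ZMod 2) = 2 ^ m := by simp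
      have h2 : 2 ^ m = 2 ^ (m - 1) * 2 := by rw [← pow_succ]; congr 1; omega
      omega
    rw [hcompl, ← mul_pow, ← hh]
    congr 1
    ring
  rw [hprod] at coeffP
  rw [← coeffP]
  have expand : ((1 : ℤ[X]) - X ^ 2) ^ h
      = ∑ k ∈ Finset.range (h + 1), Polynomial.C ((-1) ^ k * (h.choose k : ℤ)) * X ^ (2 * k) := by
    rw [sub_eq_add_neg, add_comm, add_pow]
    refine Finset.sum_congr rfl fun k _ => ?_
    rw [one_pow, mul_one, neg_pow, ← pow_mul]
    rw [map_mul, map_pow, map_neg, map_one, map_natCast]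
    ring
  rw [expand, Polynomial.finset_sum_coeff]
  have hq : h = 2 * 2 ^ (m - 2) := by
    rw [hh, ← pow_succ']; congr 1; omega
  rw [Finset.sum_eq_single (2 ^ (m - 2))]
  · rw [Polynomial.coeff_C_mul, Polynomial.coeff_X_pow, if_pos hq, mul_one]
    have : Even (2 ^ (m - 2)) := (Nat.even_pow).mpr ⟨even_two, by omega⟩
    rw [this.neg_one_pow, one_mul]
  · intro k _ hk
    rw [Polynomial.coeff_C_mul, Polynomial.coeff_X_pow, if_neg, mul_zero]
    omega
  · intro hmem
    exfalso
    apply hmem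
    rw [Finset.mem_range]
    have : 2 ^ (m - 2) < 2 ^ (m - 1) + 1 := by
      have := Nat.pow_lt_pow_right (a := 2) one_lt_two (show m - 2 < m - 1 by omega)
      omega
    omega

/-! ### The main count -/

lemma zmod2_add_eq_zero (u v : ZMod 2) : u + v = 0 ↔ u = v := by
  revert u v; decide

lemma main_count (hm : 3 ≤ m) :
    (2 ^ m : ℤ) * ((univ.filter (fun v : (Fin m → ZMod 2) → ZMod 2 =>
        wtF v = 2 ^ (m - 1) ∧ ∀ j, LF j v = if j = lastI m hm then 1 else 0)).card : ℤ)
    = ((2 ^ m).choose (2 ^ (m - 1)) : ℤ) - ((2 ^ (m - 1)).choose (2 ^ (m - 2)) : ℤ) := by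
  classical
  set e : Fin m → ZMod 2 := fun j => if j = lastI m hm then 1 else 0 with he
  set h : ℕ := 2 ^ (m - 1) with hh
  set W : Finset ((Fin m → ZMod 2) → ZMod 2) := univ.filter (fun v => wtF v = h) with hW
  set C : ℤ := ((2 ^ m).choose h : ℤ) with hC
  set D : ℤ := (h.choose (2 ^ (m - 2)) : ℤ) with hD
  have step1 : (2 ^ m : ℤ) * ((univ.filter (fun v : (Fin m → ZMod 2) → ZMod 2 =>
        wtF v = h ∧ ∀ j, LF j v = e j)).card : ℤ)
      = ∑ v ∈ W, (if (∀ j, LF j v = e j) then (2 ^ m : ℤ) else 0) := by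
    rw [← Finset.sum_filter, hW, Finset.filter_filter, Finset.sum_const]
    push_cast
    ring
  rw [step1]
  have step2 : ∀ v : (Fin m → ZMod 2) → ZMod 2,
      (if (∀ j, LF j v = e j) then (2 ^ m : ℤ) else 0)
      = ∑ a : Fin m → ZMod 2, epsZ (dotP a ((fun j => LF j v) + e)) := by
    intro v
    rw [orth]
    congr 1
    rw [eq_iff_iff]
    rw [funext_iff]
    apply forall_congr'
    intro j
    simp only [Pi.add_apply, Pi.zero_apply]
    exact (zmod2_add_eq_zero _ _).symm
  rw [Finset.sum_congr rfl (fun v _ => step2 v)]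
  have dotP_add : ∀ (a u w : Fin m → ZMod 2), dotP a (u + w) = dotP a u + dotP a w := by
    intro a u w
    unfold dotP
    rw [← Finset.sum_add_distrib]
    exact Finset.sum_congr rfl fun j _ => by simp [mul_add]
  have step3 : ∀ v ∈ W, ∑ a : Fin m → ZMod 2, epsZ (dotP a ((fun j => LF j v) + e))
      = ∑ a : Fin m → ZMod 2, epsZ (dotP a (fun j => LF j v)) * epsZ (dotP a e) := by
    intro v _
    exact Finset.sum_congr rfl fun a _ => by rw [dotP_add, epsZ_add]
  rw [Finset.sum_congr rfl step3, Finset.sum_comm]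
  have step5 : ∀ a : Fin m → ZMod 2,
      ∑ v ∈ W, epsZ (dotP a (fun j => LF j v))
      = ∑ S ∈ Finset.powersetCard h (univ : Finset (Fin m → ZMod 2)),
          ∏ y ∈ S, epsZ (dotP a y) := by
    intro a
    have h5a : ∀ v : (Fin m → ZMod 2) → ZMod 2,
        dotP a (fun j => LF j v) = ∑ y : Fin m → ZMod 2, v y * dotP a y := by
      intro v
      unfold dotP LF
      show (∑ j : Fin m, a j * ∑ y : Fin m → ZMod 2, v y * y j)
          = ∑ y : Fin m → ZMod 2, v y * ∑ j : Fin m, a j * y j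
      simp_rw [Finset.mul_sum]
      rw [Finset.sum_comm]
      exact Finset.sum_congr rfl fun y _ => Finset.sum_congr rfl fun j _ => by ring
    have h5bc : ∀ v : (Fin m → ZMod 2) → ZMod 2,
        epsZ (dotP a (fun j => LF j v)) = ∏ y ∈ suppG v, epsZ (dotP a y) := by
      intro v
      rw [h5a, epsZ_sum]
      rw [← Finset.prod_subset (Finset.subset_univ (suppG v)) (fun y _ hy => ?_)]
      · refine Finset.prod_congr rfl fun y hy => ?_
        have : v y = 1 := by simpa [suppG] using hy
        rw [this, one_mul]
      · have : v y = 0 := by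
          rcases zmod2_cases (v y) with h0 | h1
          · exact h0
          · exact absurd (by simp [suppG, h1]) hy
        rw [this, zero_mul]
        simp [epsZ]
    rw [Finset.sum_congr rfl (fun v _ => h5bc v)]
    refine Finset.sum_nbij' (fun v => suppG v) (fun S => indG S) ?_ ?_ ?_ ?_ ?_
    · intro v hv
      rw [Finset.mem_powersetCard_univ]
      rw [hW, Finset.mem_filter] at hv
      exact hv.2
    · intro S hS
      rw [Finset.mem_powersetCard_univ] at hS
      rw [hW, Finset.mem_filter]
      refine ⟨Finset.mem_univ _, ?_⟩
      show (univ.filter fun x => indG S x = 1).card = h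
      rw [show (univ.filter fun x => indG S x = 1) = suppG (indG S) from rfl, suppG_indG]
      exact hS
    · intro v _; exact indG_suppG v
    · intro S _; exact suppG_indG S
    · intro v _; rfl
  have step45 : ∀ a : Fin m → ZMod 2,
      (∑ v ∈ W, epsZ (dotP a fun j => LF j v) * epsZ (dotP a e))
      = (∑ S ∈ Finset.powersetCard h (univ : Finset (Fin m → ZMod 2)),
          ∏ y ∈ S, epsZ (dotP a y)) * epsZ (dotP a e) := by
    intro a
    rw [← Finset.sum_mul, step5 a]
  rw [Finset.sum_congr rfl (fun a _ => step45 a)]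
  have hEa : ∀ a : Fin m → ZMod 2,
      (∑ S ∈ Finset.powersetCard h (univ : Finset (Fin m → ZMod 2)),
        ∏ y ∈ S, epsZ (dotP a y)) * epsZ (dotP a e)
      = epsZ (dotP a e) * D + (if a = 0 then C - D else 0) := by
    intro a
    by_cases ha : a = 0
    · subst ha
      have hd : dotP (0 : Fin m → ZMod 2) = fun _ => 0 := by
        funext u; unfold dotP; simp
      rw [hd]
      simp only [if_pos rfl]
      have : ∀ S ∈ Finset.powersetCard h (univ : Finset (Fin m → ZMod 2)),
          ∏ y ∈ S, epsZ 0 = 1 := fun S _ => by simp [epsZ]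
      rw [Finset.sum_congr rfl this, Finset.sum_const, Finset.card_powersetCard,
        Finset.card_univ]
      have hcard2 : Fintype.card (Fin m → ZMod 2) = 2 ^ m := by simp
      rw [hcard2]
      show (((2 ^ m).choose h : ℤ) • (1:ℤ)) * epsZ 0 = epsZ 0 * D + (C - D)
      simp [epsZ, hC]
    · rw [Ea_ne hm a ha, if_neg ha, add_zero, hD, mul_comm]
  rw [Finset.sum_congr rfl (fun a _ => hEa a), Finset.sum_add_distrib, ← Finset.sum_mul]
  have he0 : e ≠ 0 := by
    intro h0
    have := congrFun h0 (lastI m hm)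
    simp [he] at this
  rw [show (∑ a : Fin m → ZMod 2, epsZ (dotP a e)) = 0 by rw [orth, if_neg he0]]
  rw [zero_mul, zero_add]
  rw [Finset.sum_ite_eq' univ (0 : Fin m → ZMod 2) (fun _ => C - D)]
  simp

end EHCaux

open EHCaux Finset in
theorem extended_hamming_coset_balanced_count (m : ℕ) (hm : 3 ≤ m)
    (a₁ : (Fin m → ZMod 2) → ZMod 2)
    (ha₁ : a₁ = fun x => ∏ i ∈ Finset.univ.filter (fun i : Fin m => (i : ℕ) < m - 1), x i) :
    (({v | (∃ c ∈ RM (m - 2) m, v = c + a₁) ∧ wtF v = 2 ^ (m - 1)}.ncard : ℚ)) =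
      (1 / (2 ^ m : ℚ)) *
        ((Nat.choose (2 ^ m) (2 ^ m / 2) : ℚ) - (Nat.choose (2 ^ m / 2) (2 ^ m / 4) : ℚ)) := by
  classical
  have hmono : a₁ = monoF (S₀ m hm) := ha₁
  have hset : {v : (Fin m → ZMod 2) → ZMod 2 |
        (∃ c ∈ RM (m - 2) m, v = c + a₁) ∧ wtF v = 2 ^ (m - 1)}
      = ↑(univ.filter (fun v : (Fin m → ZMod 2) → ZMod 2 =>
          wtF v = 2 ^ (m - 1) ∧ ∀ j, LF j v = if j = lastI m hm then 1 else 0)) := by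
    ext v
    simp only [Set.mem_setOf_eq, Finset.coe_filter, Finset.mem_univ, true_and,
      Set.mem_setOf_eq]
    constructor
    · rintro ⟨hc, hw⟩
      exact ⟨hw, (coset_iff hm a₁ v hmono hw).mp hc⟩
    · rintro ⟨hw, hc⟩
      exact ⟨(coset_iff hm a₁ v hmono hw).mpr hc, hw⟩
  rw [hset, Set.ncard_coe_finset]
  have h2 : 2 ^ m / 2 = 2 ^ (m - 1) := by
    rw [show (2:ℕ) ^ m = 2 ^ (m - 1) * 2 by rw [← pow_succ]; congr 1; omega]
    exact Nat.mul_div_cancel _ two_pos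
  have h4 : 2 ^ m / 4 = 2 ^ (m - 2) := by
    rw [show (2:ℕ) ^ m = 2 ^ (m - 2) * 4 by
      rw [show (4:ℕ) = 2 ^ 2 from rfl, ← pow_add]; congr 1; omega]
    exact Nat.mul_div_cancel _ (by norm_num)
  rw [h2, h4]
  have hmain := main_count hm
  have hcast := congrArg (fun z : ℤ => (z : ℚ)) hmain
  push_cast at hcast
  have h2m : ((2:ℚ)) ^ m ≠ 0 := by positivity
  field_simp
  linarith [hcast]
end

section
/- Let A be a binary linear code of length n and dimension K with weight distribution (A₀,...,Aₙ), and let (B₀,...,Bₙ) be the weight distribution of the dual code A⊥. Then as polynomials in X: Σᵢ Aᵢ Xⁱ = 2^{K-n} Σᵢ Bᵢ (1+X)^{n-i}(1-X)^i. -/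
open Polynomial

/-- Hamming weight of a vector in F₂ⁿ. -/
def wt {n : ℕ} (v : Fin n → ZMod 2) : ℕ :=
  (Finset.univ.filter fun j => v j ≠ 0).card

/-- Dual code: vectors orthogonal to every codeword. -/
def dualSet {n : ℕ} (A : Submodule (ZMod 2) (Fin n → ZMod 2)) : Set (Fin n → ZMod 2) :=
  {u | ∀ c ∈ A, ∑ j, u j * c j = 0}

/-- ± character on ZMod 2. -/
def chi (a : ZMod 2) : ℚ := if a = 0 then 1 else -1

lemma zmod2_cases (a : ZMod 2) : a = 0 ∨ a = 1 := by revert a; decide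

lemma chi_zero : chi 0 = 1 := rfl

lemma chi_add (a b : ZMod 2) : chi (a + b) = chi a * chi b := by
  rcases zmod2_cases a with ha | ha <;> rcases zmod2_cases b with hb | hb <;>
    subst ha <;> subst hb <;> simp [chi, show (1+1 : ZMod 2) = 0 from rfl]

lemma chi_sum {α : Type*} (t : Finset α) (f : α → ZMod 2) :
    ∏ j ∈ t, chi (f j) = chi (∑ j ∈ t, f j) := by
  classical
  induction t using Finset.induction with
  | empty => simp [chi]
  | insert _ _ h ih => rw [Finset.prod_insert h, Finset.sum_insert h, chi_add, ih]

lemma wt_le {n : ℕ} (v : Fin n → ZMod 2) : wt v ≤ n := by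
  simpa [wt] using (Finset.card_filter_le Finset.univ fun j => v j ≠ 0)

/-- Lemma 1 : the product form of the transformed term. -/
lemma prod_chi_eq {n : ℕ} (c : Fin n → ZMod 2) (x : ℚ) :
    ∏ j, (1 + chi (c j) * x) = (1 + x) ^ (n - wt c) * (1 - x) ^ (wt c) := by
  classical
  have h1 : ∀ j, (1 + chi (c j) * x) = if c j ≠ 0 then 1 - x else 1 + x := by
    intro j
    rcases zmod2_cases (c j) with h | h <;> rw [h] <;> simp [chi] <;> ring
  rw [Finset.prod_congr rfl fun j _ => h1 j, Finset.prod_ite]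
  have hcard : (Finset.univ.filter fun j => ¬ c j ≠ 0).card = n - wt c := by
    have := Finset.card_filter_add_card_filter_not (s := (Finset.univ : Finset (Fin n)))
      (p := fun j => c j ≠ 0)
    simp only [Finset.card_univ, Fintype.card_fin] at this
    have hwt : (Finset.univ.filter fun j => c j ≠ 0).card = wt c := rfl
    omega
  rw [Finset.prod_const, Finset.prod_const, hcard]
  rw [mul_comm]
  rfl

/-- subsets of Fin n ↔ binary vectors -/
def vecEquiv (n : ℕ) : Finset (Fin n) ≃ (Fin n → ZMod 2) where
  toFun t := fun j => if j ∈ t then 1 else 0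
  invFun v := Finset.univ.filter fun j => v j ≠ 0
  left_inv t := by
    ext j
    simp only [Finset.mem_filter, Finset.mem_univ, true_and]
    by_cases h : j ∈ t <;> simp [h]
  right_inv v := by
    funext j
    rcases zmod2_cases (v j) with h | h <;> simp [h]

lemma wt_vecEquiv {n : ℕ} (t : Finset (Fin n)) : wt (vecEquiv n t) = t.card := by
  classical
  unfold wt vecEquiv
  simp only [Equiv.coe_fn_mk]
  congr 1
  ext j
  by_cases h : j ∈ t <;> simp [h]

lemma dot_vecEquiv {n : ℕ} (t : Finset (Fin n)) (c : Fin n → ZMod 2) :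
    ∑ j, (vecEquiv n t) j * c j = ∑ j ∈ t, c j := by
  classical
  unfold vecEquiv
  simp only [Equiv.coe_fn_mk, ite_mul, one_mul, zero_mul]
  rw [Finset.sum_ite_mem, Finset.univ_inter]

/-- Lemma 2 : expansion over all vectors. -/
lemma prod_chi_expand {n : ℕ} (c : Fin n → ZMod 2) (x : ℚ) :
    ∏ j, (1 + chi (c j) * x) =
      ∑ v : Fin n → ZMod 2, chi (∑ j, v j * c j) * x ^ (wt v) := by
  classical
  have h := Finset.prod_add (fun j => chi (c j) * x) (fun _ => (1 : ℚ))
    (Finset.univ : Finset (Fin n))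
  simp only [Finset.prod_const_one, mul_one, add_comm] at h
  calc ∏ j, (1 + chi (c j) * x) = ∏ j, (chi (c j) * x + 1) := by
        exact Finset.prod_congr rfl fun j _ => by ring
    _ = ∑ t ∈ Finset.univ.powerset, ∏ j ∈ t, chi (c j) * x := h
    _ = ∑ t : Finset (Fin n), chi (∑ j ∈ t, c j) * x ^ t.card := by
        rw [Finset.powerset_univ]
        exact Finset.sum_congr rfl fun t _ => by
          rw [Finset.prod_mul_distrib, Finset.prod_const, chi_sum]
    _ = ∑ v : Fin n → ZMod 2, chi (∑ j, v j * c j) * x ^ (wt v) :=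
        Fintype.sum_equiv (vecEquiv n) _ _ fun t => by rw [dot_vecEquiv, wt_vecEquiv]

lemma chi_one : chi 1 = -1 := rfl

lemma add_self_zero {n : ℕ} (u : Fin n → ZMod 2) : u + u = 0 := by
  funext j
  rcases zmod2_cases (u j) with h | h <;>
    simp [h, show (1 + 1 : ZMod 2) = 0 from rfl]

open Classical in
lemma sum_chi_eq_zero {n : ℕ} (W : Submodule (ZMod 2) (Fin n → ZMod 2))
    (v : Fin n → ZMod 2) (hv : ¬ ∀ c ∈ W, ∑ j, v j * c j = 0) :
    ∑ c ∈ Finset.univ.filter (· ∈ W), chi (∑ j, v j * c j) = 0 := by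
  classical
  push_neg at hv
  obtain ⟨c₀, hc₀, hne⟩ := hv
  have hdot : ∑ j, v j * c₀ j = 1 := (zmod2_cases _).resolve_left hne
  set s : Finset (Fin n → ZMod 2) := Finset.univ.filter (· ∈ W) with hs
  have hmem : ∀ c : Fin n → ZMod 2, c ∈ s ↔ c + c₀ ∈ s := by
    intro c
    simp only [hs, Finset.mem_filter, Finset.mem_univ, true_and]
    constructor
    · exact fun h => W.add_mem h hc₀
    · intro h
      have := W.add_mem h hc₀
      rwa [add_assoc, add_self_zero, add_zero] at this
  have key : (∑ c ∈ s, chi (∑ j, v j * (c + c₀) j)) =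
      ∑ c ∈ s, chi (∑ j, v j * c j) :=
    Finset.sum_equiv (Equiv.addRight c₀) (fun c => hmem c) (fun c _ => rfl)
  have hneg : ∀ c : Fin n → ZMod 2,
      chi (∑ j, v j * (c + c₀) j) = - chi (∑ j, v j * c j) := by
    intro c
    have : (∑ j, v j * (c + c₀) j) = (∑ j, v j * c j) + ∑ j, v j * c₀ j := by
      rw [← Finset.sum_add_distrib]
      exact Finset.sum_congr rfl fun j _ => by simp [Pi.add_apply, mul_add]
    rw [this, hdot, chi_add, chi_one]
    ring
  rw [Finset.sum_congr rfl fun c _ => hneg c, Finset.sum_neg_distrib] at key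
  linarith [key]

open Classical in
/-- The core MacWilliams transform computation. -/
lemma transform_sum {n : ℕ} (W : Submodule (ZMod 2) (Fin n → ZMod 2)) (x : ℚ) :
    ∑ c ∈ Finset.univ.filter (· ∈ W), (1 + x) ^ (n - wt c) * (1 - x) ^ (wt c) =
      ((Finset.univ.filter (· ∈ W)).card : ℚ) *
        ∑ u ∈ Finset.univ.filter (fun u => ∀ c ∈ W, ∑ j, u j * c j = 0), x ^ (wt u) := by
  classical
  set s : Finset (Fin n → ZMod 2) := Finset.univ.filter (· ∈ W) with hs
  calc ∑ c ∈ s, (1 + x) ^ (n - wt c) * (1 - x) ^ (wt c)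
      = ∑ c ∈ s, ∑ v : Fin n → ZMod 2, chi (∑ j, v j * c j) * x ^ (wt v) :=
        Finset.sum_congr rfl fun c _ => by rw [← prod_chi_expand, prod_chi_eq]
    _ = ∑ v : Fin n → ZMod 2, (∑ c ∈ s, chi (∑ j, v j * c j)) * x ^ (wt v) := by
        rw [Finset.sum_comm]
        exact Finset.sum_congr rfl fun v _ => (Finset.sum_mul _ _ _).symm
    _ = ∑ v : Fin n → ZMod 2,
          (if (∀ c ∈ W, ∑ j, v j * c j = 0) then (s.card : ℚ) else 0) * x ^ (wt v) := by
        refine Finset.sum_congr rfl fun v _ => ?_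
        by_cases hv : ∀ c ∈ W, ∑ j, v j * c j = 0
        · rw [if_pos hv]
          congr 1
          rw [Finset.sum_congr rfl fun c hc => by
              rw [hv c (by simpa [hs] using hc), chi_zero]]
          simp
        · rw [if_neg hv, sum_chi_eq_zero W v hv]
    _ = ∑ v ∈ Finset.univ.filter (fun u => ∀ c ∈ W, ∑ j, u j * c j = 0),
          (s.card : ℚ) * x ^ (wt v) := by
        rw [Finset.sum_filter]
        exact Finset.sum_congr rfl fun v _ => by rw [ite_mul, zero_mul]
    _ = _ := by rw [Finset.mul_sum]

/-- The dot-product bilinear form on F₂ⁿ. -/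
def dotForm (n : ℕ) : LinearMap.BilinForm (ZMod 2) (Fin n → ZMod 2) :=
  LinearMap.mk₂ (ZMod 2) (fun u v => ∑ j, u j * v j)
    (fun u u' v => by simp [add_mul, Finset.sum_add_distrib])
    (fun a u v => by simp [Finset.mul_sum, mul_assoc])
    (fun u v v' => by simp [mul_add, Finset.sum_add_distrib])
    (fun a u v => by simp [Finset.mul_sum, mul_left_comm])

lemma dotForm_apply {n : ℕ} (u v : Fin n → ZMod 2) :
    dotForm n u v = ∑ j, u j * v j := rfl

lemma dotForm_comm {n : ℕ} (u v : Fin n → ZMod 2) :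
    dotForm n u v = dotForm n v u := by
  rw [dotForm_apply, dotForm_apply]
  exact Finset.sum_congr rfl fun j _ => mul_comm _ _

lemma dotForm_refl {n : ℕ} : (dotForm n).IsRefl := fun u v h => by
  rw [dotForm_comm]; exact h

lemma dotForm_nondegenerate {n : ℕ} : (dotForm n).Nondegenerate := by
  refine (LinearMap.IsRefl.nondegenerate_iff_separatingLeft dotForm_refl).mpr ?_
  intro u hu
  funext j
  have := hu (Pi.single j 1)
  rw [dotForm_apply] at this
  simpa [Pi.single_apply, mul_ite] using this

open Classical in
lemma card_filter_mem {n : ℕ} (W : Submodule (ZMod 2) (Fin n → ZMod 2)) :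
    (Finset.univ.filter (· ∈ W)).card = 2 ^ (Module.finrank (ZMod 2) W) := by
  rw [← Fintype.card_subtype]
  have h := Module.card_eq_pow_finrank (K := ZMod 2) (V := W)
  rwa [ZMod.card] at h

open Classical in
lemma sum_by_weight {n : ℕ} (s : Finset (Fin n → ZMod 2)) (g : ℕ → ℚ) :
    ∑ i ∈ Finset.range (n + 1), ((s.filter (fun v => wt v = i)).card : ℚ) * g i =
      ∑ v ∈ s, g (wt v) := by
  rw [← Finset.sum_fiberwise_of_maps_to
      (fun v _ => Finset.mem_range.mpr (Nat.lt_succ_of_le (wt_le v))) (fun v => g (wt v))]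
  refine Finset.sum_congr rfl fun i _ => ?_
  rw [Finset.sum_congr rfl (fun v hv => by rw [(Finset.mem_filter.mp hv).2]),
    Finset.sum_const, nsmul_eq_mul]

open Classical in
lemma ncard_eq_card_filter {n : ℕ} (p : (Fin n → ZMod 2) → Prop) :
    {v | p v}.ncard = (Finset.univ.filter p).card := by
  have h : {v | p v} = ↑(Finset.univ.filter p) := by ext v; simp
  rw [h, Set.ncard_coe_finset]


theorem macwilliams_identity (n Kdim : ℕ)
    (A : Submodule (ZMod 2) (Fin n → ZMod 2))
    (hK : Module.finrank (ZMod 2) A = Kdim)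
    (Aw B : ℕ → ℕ)
    (hA : ∀ i, Aw i = {v | v ∈ A ∧ wt v = i}.ncard)
    (hB : ∀ i, B i = {u | u ∈ dualSet A ∧ wt u = i}.ncard) :
    ∑ i ∈ Finset.range (n + 1), Polynomial.C ((Aw i : ℚ)) * Polynomial.X ^ i =
      Polynomial.C ((2 : ℚ) ^ ((Kdim : ℤ) - (n : ℤ))) *
        ∑ i ∈ Finset.range (n + 1),
          Polynomial.C ((B i : ℚ)) *
            (1 + Polynomial.X) ^ (n - i) * (1 - Polynomial.X) ^ i := by
  classical
  set D : Submodule (ZMod 2) (Fin n → ZMod 2) := (dotForm n).orthogonal A with hDdef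
  have hamb : Module.finrank (ZMod 2) (Fin n → ZMod 2) = n := Module.finrank_fin_fun (ZMod 2)
  have hKn : Kdim ≤ n := by
    have h := Submodule.finrank_le A
    rw [hamb] at h
    omega
  have hD : Module.finrank (ZMod 2) D = n - Kdim := by
    rw [hDdef, LinearMap.BilinForm.finrank_orthogonal dotForm_nondegenerate,
      hamb, hK]
  have hDD : (dotForm n).orthogonal D = A :=
    LinearMap.BilinForm.orthogonal_orthogonal dotForm_nondegenerate dotForm_refl A
  -- membership descriptions
  have hmemD : ∀ u, u ∈ D ↔ (∀ c ∈ A, ∑ j, u j * c j = 0) := by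
    intro u
    rw [hDdef, LinearMap.BilinForm.mem_orthogonal_iff]
    constructor
    · intro h c hc
      have := h c hc
      rw [dotForm_comm, dotForm_apply] at this
      exact this
    · intro h c hc
      rw [dotForm_comm, dotForm_apply]
      exact h c hc
  have hmemA : ∀ u, (∀ c ∈ D, ∑ j, u j * c j = 0) ↔ u ∈ A := by
    intro u
    rw [← hDD, LinearMap.BilinForm.mem_orthogonal_iff]
    constructor
    · intro h c hc
      rw [dotForm_comm, dotForm_apply]
      exact h c hc
    · intro h c hc
      have := h c hc
      rw [dotForm_comm, dotForm_apply] at this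
      exact this
  apply Polynomial.funext
  intro x
  simp only [Polynomial.eval_mul, Polynomial.eval_finset_sum, Polynomial.eval_mul,
    Polynomial.eval_pow, Polynomial.eval_C, Polynomial.eval_X, Polynomial.eval_add,
    Polynomial.eval_one, Polynomial.eval_sub]
  -- the A-side sum
  have hAside : ∑ i ∈ Finset.range (n + 1), (Aw i : ℚ) * x ^ i =
      ∑ v ∈ Finset.univ.filter (· ∈ A), x ^ (wt v) := by
    rw [← sum_by_weight (Finset.univ.filter (· ∈ A)) (fun i => x ^ i)]
    refine Finset.sum_congr rfl fun i _ => ?_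
    rw [hA i, ncard_eq_card_filter]
    congr 3
    ext v
    simp [Finset.mem_filter]
  -- the B-side sum
  have hBside : ∑ i ∈ Finset.range (n + 1), (B i : ℚ) * (1 + x) ^ (n - i) * (1 - x) ^ i =
      ∑ v ∈ Finset.univ.filter (· ∈ D), (1 + x) ^ (n - wt v) * (1 - x) ^ (wt v) := by
    rw [← sum_by_weight (Finset.univ.filter (· ∈ D))
      (fun i => (1 + x) ^ (n - i) * (1 - x) ^ i)]
    refine Finset.sum_congr rfl fun i _ => ?_
    rw [mul_assoc, hB i, ncard_eq_card_filter]
    congr 3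
    ext u
    simp only [Finset.mem_filter, Finset.mem_univ, true_and, and_comm]
    exact and_congr_right' ⟨fun h1 => (hmemD u).mpr h1, fun h1 => (hmemD u).mp h1⟩
  have htrans := transform_sum D x
  have hfilter_eq : (Finset.univ.filter (fun u => ∀ c ∈ D, ∑ j, u j * c j = 0)) =
      Finset.univ.filter (· ∈ A) := by
    apply Finset.filter_congr
    intro u _
    simpa using hmemA u
  rw [hfilter_eq] at htrans
  have hcardD : ((Finset.univ.filter (· ∈ D)).card : ℚ) = 2 ^ (n - Kdim) := by
    rw [card_filter_mem D, hD]; push_cast; ring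
  rw [hBside, htrans, hcardD, hAside]
  rw [← mul_assoc]
  have hscal : (2 : ℚ) ^ ((Kdim : ℤ) - (n : ℤ)) * 2 ^ (n - Kdim) = 1 := by
    rw [show ((2 : ℚ) ^ (n - Kdim : ℕ)) = (2 : ℚ) ^ ((n : ℤ) - (Kdim : ℤ)) by
      rw [← zpow_natCast]; congr 1; omega]
    rw [← zpow_add₀ (two_ne_zero)]
    simp
  rw [hscal, one_mul]
end
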